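/- Under the preconditioner setup, if μ > ‖ℰ‖₂, then κ( P̂^{-1/2} (A + μI) P̂^{-1/2} ) ≤ 1 + (λ̂_k + ‖E‖₂ + 2‖ℰ‖₂)/(μ − ‖ℰ‖₂). -/

import Mathlib

open Matrix

/-- The spectral norm (largest singular value) of a real matrix,
as the `ℓ²→ℓ²` operator norm. -/
noncomputable def specNorm2 {m n : ℕ} (M : Matrix (Fin m) (Fin n) ℝ) : ℝ :=
  ‖LinearMap.toContinuousLinearMap (Matrix.toEuclideanLin M)‖

/-- The largest eigenvalue of a real symmetric matrix, as the supremum of the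
Rayleigh quotient over the unit sphere. -/
noncomputable def lmax {n : ℕ} (M : Matrix (Fin n) (Fin n) ℝ) : ℝ :=
  ⨆ x : Metric.sphere (0 : EuclideanSpace ℝ (Fin n)) 1,
    (inner ℝ (x : EuclideanSpace ℝ (Fin n))
      (Matrix.toEuclideanLin M (x : EuclideanSpace ℝ (Fin n))) : ℝ)

/-- The smallest eigenvalue of a real symmetric matrix, as the infimum of the
Rayleigh quotient over the unit sphere. -/
noncomputable def lmin {n : ℕ} (M : Matrix (Fin n) (Fin n) ℝ) : ℝ :=
  ⨅ x : Metric.sphere (0 : EuclideanSpace ℝ (Fin n)) 1,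
    (inner ℝ (x : EuclideanSpace ℝ (Fin n))
      (Matrix.toEuclideanLin M (x : EuclideanSpace ℝ (Fin n))) : ℝ)

open scoped ComplexOrder in
/-- The positive semidefinite square root of a positive semidefinite matrix
(the definition `Matrix.PosSemidef.sqrt` of the older Mathlib, since removed). -/
noncomputable def Matrix.PosSemidef.sqrt {n : Type*} [Fintype n] {𝕜 : Type*} [RCLike 𝕜]
    [DecidableEq n] {A : Matrix n n 𝕜} (hA : A.PosSemidef) : Matrix n n 𝕜 :=
  hA.1.eigenvectorUnitary.1 * diagonal ((↑) ∘ (√·) ∘ hA.1.eigenvalues) *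
  (star hA.1.eigenvectorUnitary : Matrix n n 𝕜)

open scoped MatrixOrder in
lemma aux_eq_sqrt_of_sq_eq {n : ℕ} {P T : Matrix (Fin n) (Fin n) ℝ} (hT : T.PosSemidef)
    (hP : P.PosSemidef) (h : T ^ 2 = P) : T = hP.sqrt := by
  have h1 : hP.sqrt = cfc Real.sqrt P := by
    rw [hP.1.cfc_eq, Matrix.IsHermitian.cfc]
    rfl
  have h2 : CFC.sqrt P = T := CFC.sqrt_unique (by rw [← h, sq]) hT.nonneg
  rw [h1, ← cfcₙ_eq_cfc (hf0 := by simp), ← CFC.sqrt_eq_real_sqrt P hP.nonneg, h2]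

/- ### Auxiliary lemmas -/

lemma aux_inner_eq_dot {n : ℕ} (M : Matrix (Fin n) (Fin n) ℝ) (x : EuclideanSpace ℝ (Fin n)) :
    (inner ℝ x (Matrix.toEuclideanLin M x) : ℝ)
      = (WithLp.equiv 2 (Fin n → ℝ) x) ⬝ᵥ (M *ᵥ (WithLp.equiv 2 (Fin n → ℝ) x)) := by
  simp [PiLp.inner_apply, RCLike.inner_apply, dotProduct, toEuclideanLin_apply, mul_comm]

lemma aux_norm_sq {n : ℕ} (x : EuclideanSpace ℝ (Fin n)) :
    ‖x‖^2 = (WithLp.equiv 2 (Fin n → ℝ) x) ⬝ᵥ (WithLp.equiv 2 (Fin n → ℝ) x) := by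
  rw [← real_inner_self_eq_norm_sq]
  simp [PiLp.inner_apply, RCLike.inner_apply, dotProduct]
  rw [EuclideanSpace.norm_eq, Real.sq_sqrt (by positivity)]
  simp [sq]

lemma aux_spec_bound {n : ℕ} (M : Matrix (Fin n) (Fin n) ℝ) (w : Fin n → ℝ) :
    |w ⬝ᵥ (M *ᵥ w)| ≤ specNorm2 M * (w ⬝ᵥ w) := by
  set x : EuclideanSpace ℝ (Fin n) := (WithLp.equiv 2 (Fin n → ℝ)).symm w with hx
  have hxw : WithLp.equiv 2 (Fin n → ℝ) x = w := rfl
  have h1 : w ⬝ᵥ (M *ᵥ w) = (inner ℝ x (Matrix.toEuclideanLin M x) : ℝ) := by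
    rw [aux_inner_eq_dot, hxw]
  have h2 : w ⬝ᵥ w = ‖x‖^2 := by rw [aux_norm_sq, hxw]
  rw [h1, h2]
  calc |(inner ℝ x (Matrix.toEuclideanLin M x) : ℝ)| ≤ ‖x‖ * ‖Matrix.toEuclideanLin M x‖ :=
        abs_real_inner_le_norm _ _
    _ ≤ ‖x‖ * (specNorm2 M * ‖x‖) := by
        gcongr
        exact (LinearMap.toContinuousLinearMap (Matrix.toEuclideanLin M)).le_opNorm x
    _ = specNorm2 M * ‖x‖^2 := by ring

lemma aux_psd_dot {n : ℕ} {M : Matrix (Fin n) (Fin n) ℝ} (hM : M.PosSemidef)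
    (w : Fin n → ℝ) : 0 ≤ w ⬝ᵥ (M *ᵥ w) := by
  have := hM.dotProduct_mulVec_nonneg w
  rwa [star_trivial] at this

lemma specNorm2_nonneg {m n : ℕ} (M : Matrix (Fin m) (Fin n) ℝ) : 0 ≤ specNorm2 M :=
  norm_nonneg _

/-- Preconditioner setup: `n > k ≥ 1`, `A` real symmetric with `A + μI` positive
definite (`μ ≥ 0`), `Û` with orthonormal columns (`ÛᵀÛ = I`),
`Θ̂ = diag(λ̂_1,…,λ̂_k)` with `λ̂_1 ≥ … ≥ λ̂_k > 0`, `Â_N = Û Θ̂ Ûᵀ`,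
`A = Â_N + E + ℰ` with `E, ℰ` symmetric and `E` positive semidefinite, and
`P̂⁻¹ = I − ÛÛᵀ + (λ̂_k + μ) Û (Θ̂ + μI)⁻¹ Ûᵀ`, which is symmetric positive definite;
`P̂^{-1/2}` is its positive semidefinite square root.
If `μ > ‖ℰ‖₂`, then `κ(P̂^{-1/2}(A + μI)P̂^{-1/2}) ≤ 1 + (λ̂_k + ‖E‖₂ + 2‖ℰ‖₂)/(μ − ‖ℰ‖₂)`. -/
theorem stmt9 {n k : ℕ} (hk : 1 ≤ k) (hkn : k < n)
    (A : Matrix (Fin n) (Fin n) ℝ) (hA : A.IsHermitian)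
    (μ : ℝ) (hμ : 0 ≤ μ) (hAμ : (A + μ • 1).PosDef)
    (U : Matrix (Fin n) (Fin k) ℝ) (hU : Uᵀ * U = 1)
    (lamh : Fin k → ℝ) (hlamh : Antitone lamh) (hlamhk : 0 < lamh ⟨k - 1, by omega⟩)
    (E Err : Matrix (Fin n) (Fin n) ℝ) (hE : E.IsHermitian) (hErr : Err.IsHermitian)
    (hEpsd : E.PosSemidef)
    (hsum : A = U * Matrix.diagonal lamh * Uᵀ + E + Err)
    (hPinvPD : ((1 : Matrix (Fin n) (Fin n) ℝ) - U * Uᵀ +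
      (lamh ⟨k - 1, by omega⟩ + μ) • (U * (Matrix.diagonal lamh + μ • 1)⁻¹ * Uᵀ)).PosDef)
    (hμErr : specNorm2 Err < μ) :
    let S := hPinvPD.posSemidef.sqrt
    let M := S * (A + μ • 1) * S
    lmax M / lmin M ≤
      1 + (lamh ⟨k - 1, by omega⟩ + specNorm2 E + 2 * specNorm2 Err) /
        (μ - specNorm2 Err) := by
  intro S M
  have hkk : k - 1 < k := by omega
  set c : ℝ := lamh ⟨k - 1, hkk⟩ with hc_def
  have hc : 0 < c := hlamhk
  -- basic facts on eigenvalue vector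
  have hcle : ∀ i : Fin k, c ≤ lamh i := by
    intro i
    have h2 := i.2
    exact hlamh (by rw [Fin.le_def]; simp only []; omega)
  have hlpos : ∀ i : Fin k, 0 < lamh i + μ := fun i =>
    add_pos_of_pos_of_nonneg (lt_of_lt_of_le hc (hcle i)) hμ
  set d : Fin k → ℝ := fun i => (c + μ) / (lamh i + μ) with hd_def
  have hd0 : ∀ i, 0 ≤ d i := fun i =>
    div_nonneg (by linarith [hc]) (le_of_lt (hlpos i))
  have hd1 : ∀ i, d i ≤ 1 := fun i =>
    (div_le_one (hlpos i)).2 (by linarith [hcle i])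
  set g : Fin k → ℝ := fun i => Real.sqrt (d i) with hg_def
  set Θ : Matrix (Fin k) (Fin k) ℝ := Matrix.diagonal lamh with hΘ_def
  set G : Matrix (Fin k) (Fin k) ℝ := Matrix.diagonal g with hG_def
  obtain ⟨T, hT_def⟩ : ∃ T' : Matrix (Fin n) (Fin n) ℝ, T' = 1 - U * Uᵀ + U * G * Uᵀ :=
    ⟨_, rfl⟩
  have hGG : G * G = Matrix.diagonal d := by
    have hfun : (fun i => g i * g i) = d := funext fun i => Real.mul_self_sqrt (hd0 i)
    rw [hG_def, Matrix.diagonal_mul_diagonal, hfun]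
  have hUU : ∀ X : Matrix (Fin k) (Fin n) ℝ, Uᵀ * (U * X) = X := fun X => by
    rw [← Matrix.mul_assoc, hU, Matrix.one_mul]
  -- products
  have hPP : (U * Uᵀ) * (U * Uᵀ) = U * Uᵀ := by
    simp only [Matrix.mul_assoc]; rw [hUU]
  have hPQ : (U * Uᵀ) * (U * G * Uᵀ) = U * G * Uᵀ := by
    simp only [Matrix.mul_assoc]; rw [hUU]
  have hQP : (U * G * Uᵀ) * (U * Uᵀ) = U * G * Uᵀ := by
    simp only [Matrix.mul_assoc]; rw [hUU]
  have hQQ : (U * G * Uᵀ) * (U * G * Uᵀ) = U * Matrix.diagonal d * Uᵀ := by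
    simp only [Matrix.mul_assoc]; rw [hUU, ← Matrix.mul_assoc G G, hGG]
  have hTT : T * T = 1 - U * Uᵀ + U * Matrix.diagonal d * Uᵀ := by
    have expand : T * T
        = 1 - (U*Uᵀ) - (U*Uᵀ) + (U*Uᵀ)*(U*Uᵀ) + (U*G*Uᵀ) - (U*Uᵀ)*(U*G*Uᵀ)
          + (U*G*Uᵀ) - (U*G*Uᵀ)*(U*Uᵀ) + (U*G*Uᵀ)*(U*G*Uᵀ) := by
      rw [hT_def]; noncomm_ring
    rw [expand, hPP, hPQ, hQP, hQQ]
    abel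
  -- (Θ + μ 1)⁻¹ explicitly
  have hinv : (Θ + μ • (1 : Matrix (Fin k) (Fin k) ℝ))⁻¹
      = Matrix.diagonal (fun i => (lamh i + μ)⁻¹) := by
    rw [hΘ_def, Matrix.smul_one_eq_diagonal, Matrix.diagonal_add]
    refine Matrix.inv_eq_right_inv ?_
    rw [Matrix.diagonal_mul_diagonal]
    have : (fun i => (lamh i + μ) * (lamh i + μ)⁻¹) = fun _ : Fin k => (1:ℝ) :=
      funext fun i => mul_inv_cancel₀ (ne_of_gt (hlpos i))
    rw [this, Matrix.diagonal_one]
  have hsmul : (c + μ) • (U * (Θ + μ • (1 : Matrix (Fin k) (Fin k) ℝ))⁻¹ * Uᵀ)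
      = U * Matrix.diagonal d * Uᵀ := by
    have hfun : ((c + μ) • fun i => (lamh i + μ)⁻¹) = d := by
      funext i
      simp [hd_def, div_eq_mul_inv, smul_eq_mul]
    rw [hinv, ← Matrix.smul_mul, ← Matrix.mul_smul, ← Matrix.diagonal_smul, hfun]
  have hT2 : T ^ 2 = (1 : Matrix (Fin n) (Fin n) ℝ) - U * Uᵀ +
      (lamh ⟨k - 1, hkk⟩ + μ) • (U * (Matrix.diagonal lamh + μ • 1)⁻¹ * Uᵀ) := by
    rw [pow_two, hTT, ← hc_def, ← hΘ_def, hsmul]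
  -- T is positive semidefinite
  have hUt : Uᴴ = Uᵀ := Matrix.conjTranspose_eq_transpose_of_trivial U
  have psd1 : ((1 : Matrix (Fin n) (Fin n) ℝ) - U * Uᵀ).PosSemidef := by
    have h := Matrix.posSemidef_self_mul_conjTranspose
      ((1 : Matrix (Fin n) (Fin n) ℝ) - U * Uᵀ)
    have heq : ((1 : Matrix (Fin n) (Fin n) ℝ) - U * Uᵀ) *
        ((1 : Matrix (Fin n) (Fin n) ℝ) - U * Uᵀ)ᴴ = 1 - U * Uᵀ := by
      rw [Matrix.conjTranspose_eq_transpose_of_trivial, Matrix.transpose_sub,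
        Matrix.transpose_one, Matrix.transpose_mul, Matrix.transpose_transpose]
      have expand : ((1 : Matrix (Fin n) (Fin n) ℝ) - U * Uᵀ) * (1 - U * Uᵀ)
          = 1 - (U*Uᵀ) - (U*Uᵀ) + (U*Uᵀ)*(U*Uᵀ) := by noncomm_ring
      rw [expand, hPP]; abel
    rwa [heq] at h
  have psdUUT : (U * Uᵀ : Matrix (Fin n) (Fin n) ℝ).PosSemidef := by
    have h := Matrix.posSemidef_self_mul_conjTranspose U
    rwa [hUt] at h
  have psd2 : (U * G * Uᵀ).PosSemidef := by
    have hGpsd : G.PosSemidef := Matrix.PosSemidef.diagonal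
      (fun i => Real.sqrt_nonneg (d i))
    have h := hGpsd.mul_mul_conjTranspose_same U
    rwa [hUt] at h
  have hTps : T.PosSemidef := by
    rw [hT_def]; exact psd1.add psd2
  -- S = T
  have hST : T = hPinvPD.posSemidef.sqrt :=
    aux_eq_sqrt_of_sq_eq hTps hPinvPD.posSemidef hT2
  have hM : M = T * (A + μ • 1) * T := by
    show hPinvPD.posSemidef.sqrt * (A + μ • 1) * hPinvPD.posSemidef.sqrt = T * (A + μ • 1) * T
    rw [← hST]
  -- symmetric T
  have hTsym : Tᵀ = T := by
    rw [← Matrix.conjTranspose_eq_transpose_of_trivial]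
    exact hTps.1
  -- the middle identity
  have h1 : (U * Uᵀ) * (U * Θ * Uᵀ) = U * Θ * Uᵀ := by
    simp only [Matrix.mul_assoc]; rw [hUU]
  have h2 : (U * G * Uᵀ) * (U * Θ * Uᵀ) = U * (G * Θ) * Uᵀ := by
    simp only [Matrix.mul_assoc]; rw [hUU]
  have hTX : T * (U * Θ * Uᵀ) = U * (G * Θ) * Uᵀ := by
    have expand : T * (U * Θ * Uᵀ)
        = U * Θ * Uᵀ - (U*Uᵀ) * (U * Θ * Uᵀ) + (U*G*Uᵀ) * (U * Θ * Uᵀ) := by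
      rw [hT_def]; noncomm_ring
    rw [expand, h1, h2, sub_self, zero_add]
  have h3 : (U * (G * Θ) * Uᵀ) * (U * Uᵀ) = U * (G * Θ) * Uᵀ := by
    simp only [Matrix.mul_assoc]; rw [hUU]
  have h4 : (U * (G * Θ) * Uᵀ) * (U * G * Uᵀ) = U * (G * Θ * G) * Uᵀ := by
    simp only [Matrix.mul_assoc]; rw [hUU]
  have hXT : (U * (G * Θ) * Uᵀ) * T = U * (G * Θ * G) * Uᵀ := by
    have expand : (U * (G * Θ) * Uᵀ) * T
        = U * (G * Θ) * Uᵀ - (U * (G * Θ) * Uᵀ) * (U*Uᵀ)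
          + (U * (G * Θ) * Uᵀ) * (U*G*Uᵀ) := by
      rw [hT_def]; noncomm_ring
    rw [expand, h3, h4, sub_self, zero_add]
  have hcomb : U * (G * Θ * G) * Uᵀ + μ • (U * Matrix.diagonal d * Uᵀ)
      = (c + μ) • (U * Uᵀ) := by
    have hGTG : G * Θ * G = Matrix.diagonal (fun i => d i * lamh i) := by
      have hfun : (fun i => g i * lamh i * g i) = fun i => d i * lamh i := by
        funext i
        have hss := Real.mul_self_sqrt (hd0 i)
        simp only [hg_def]
        rw [mul_right_comm, hss]
      rw [hG_def, hΘ_def, Matrix.diagonal_mul_diagonal, Matrix.diagonal_mul_diagonal, hfun]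
    have e1 : μ • (U * Matrix.diagonal d * Uᵀ) = U * (μ • Matrix.diagonal d) * Uᵀ := by
      rw [Matrix.mul_smul, Matrix.smul_mul]
    have e2 : Matrix.diagonal (fun i => d i * lamh i) + μ • Matrix.diagonal d
        = (c + μ) • (1 : Matrix (Fin k) (Fin k) ℝ) := by
      rw [← Matrix.diagonal_smul, Matrix.diagonal_add, Matrix.smul_one_eq_diagonal]
      have hfun : (fun i => d i * lamh i + (μ • d) i) = fun _ : Fin k => c + μ := by
        funext i
        have hne : lamh i + μ ≠ 0 := ne_of_gt (hlpos i)
        simp only [Pi.smul_apply, smul_eq_mul, hd_def]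
        field_simp
      rw [hfun]
    rw [hGTG, e1, ← Matrix.add_mul, ← Matrix.mul_add, e2, Matrix.mul_smul, Matrix.mul_one,
      Matrix.smul_mul]
  have hMid : T * (U * Θ * Uᵀ + μ • 1) * T = μ • (1 : Matrix (Fin n) (Fin n) ℝ)
      + c • (U * Uᵀ) := by
    have step : T * (U * Θ * Uᵀ + μ • 1) * T = T * (U * Θ * Uᵀ) * T + μ • (T * T) := by
      rw [Matrix.mul_add, Matrix.add_mul, Matrix.mul_smul, Matrix.mul_one, Matrix.smul_mul]
    rw [step, Matrix.mul_assoc T, ← Matrix.mul_assoc T (U * Θ * Uᵀ) T, hTX, hXT, hTT]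
    rw [smul_add, smul_sub]
    have : U * (G * Θ * G) * Uᵀ + (μ • (1 : Matrix (Fin n) (Fin n) ℝ) - μ • (U * Uᵀ)
        + μ • (U * Matrix.diagonal d * Uᵀ))
        = (U * (G * Θ * G) * Uᵀ + μ • (U * Matrix.diagonal d * Uᵀ))
          + μ • (1 : Matrix (Fin n) (Fin n) ℝ) - μ • (U * Uᵀ) := by abel
    rw [this, hcomb, add_smul]
    abel
  -- decomposition of M
  have hMdecomp : M = (μ • (1 : Matrix (Fin n) (Fin n) ℝ) + c • (U * Uᵀ))
      + T * E * T + T * Err * T := by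
    rw [hM, hsum]
    have expand : T * (U * Matrix.diagonal lamh * Uᵀ + E + Err + μ • 1) * T
        = T * (U * Matrix.diagonal lamh * Uᵀ + μ • (1 : Matrix (Fin n) (Fin n) ℝ)) * T
          + T * E * T + T * Err * T := by
      noncomm_ring
    rw [expand, ← hΘ_def, hMid]
  -- psd matrix 1 - T*T
  have psd3 : ((1 : Matrix (Fin n) (Fin n) ℝ) - T * T).PosSemidef := by
    have heq : (1 : Matrix (Fin n) (Fin n) ℝ) - T * T
        = U * Matrix.diagonal (fun i => 1 - d i) * Uᵀ := by
      rw [hTT]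
      have : Matrix.diagonal (fun i => 1 - d i)
          = (1 : Matrix (Fin k) (Fin k) ℝ) - Matrix.diagonal d := by
        rw [← Matrix.diagonal_one, Matrix.diagonal_sub]
      rw [this, Matrix.mul_sub, Matrix.sub_mul, Matrix.mul_one]
      abel
    rw [heq]
    have hpsd : (Matrix.diagonal (fun i => 1 - d i)).PosSemidef :=
      Matrix.PosSemidef.diagonal (by
        intro i
        simp only [Pi.zero_apply]
        linarith [hd1 i])
    have h := hpsd.mul_mul_conjTranspose_same U
    rwa [hUt] at h
  -- pointwise Rayleigh bounds
  have key : ∀ x : Metric.sphere (0 : EuclideanSpace ℝ (Fin n)) 1,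
      μ - specNorm2 Err ≤ (inner ℝ (x : EuclideanSpace ℝ (Fin n))
        (Matrix.toEuclideanLin M (x : EuclideanSpace ℝ (Fin n))) : ℝ) ∧
      (inner ℝ (x : EuclideanSpace ℝ (Fin n))
        (Matrix.toEuclideanLin M (x : EuclideanSpace ℝ (Fin n))) : ℝ)
        ≤ μ + c + specNorm2 E + specNorm2 Err := by
    rintro ⟨x, hx⟩
    have hxnorm : ‖x‖ = 1 := by
      simpa [mem_sphere_zero_iff_norm] using hx
    set v : Fin n → ℝ := WithLp.equiv 2 (Fin n → ℝ) x with hv_def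
    have hvv : v ⬝ᵥ v = 1 := by
      rw [← aux_norm_sq, hxnorm]; norm_num
    have hq : (inner ℝ x (Matrix.toEuclideanLin M x) : ℝ) = v ⬝ᵥ (M *ᵥ v) :=
      aux_inner_eq_dot M x
    set w : Fin n → ℝ := T *ᵥ v with hw_def
    -- dot with T on left
    have hdotT : ∀ z : Fin n → ℝ, v ⬝ᵥ (T *ᵥ z) = w ⬝ᵥ z := by
      intro z
      rw [Matrix.dotProduct_mulVec, hw_def, ← Matrix.mulVec_transpose, hTsym]
    have hTBT : ∀ B : Matrix (Fin n) (Fin n) ℝ, v ⬝ᵥ ((T * B * T) *ᵥ v) = w ⬝ᵥ (B *ᵥ w) := by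
      intro B
      rw [← Matrix.mulVec_mulVec, ← Matrix.mulVec_mulVec, hdotT, hw_def]
    have hww : w ⬝ᵥ w ≤ 1 := by
      have h0 : 0 ≤ v ⬝ᵥ (((1 : Matrix (Fin n) (Fin n) ℝ) - T * T) *ᵥ v) :=
        aux_psd_dot psd3 v
      have heq2 : v ⬝ᵥ (((1 : Matrix (Fin n) (Fin n) ℝ) - T * T) *ᵥ v)
          = 1 - w ⬝ᵥ w := by
        rw [Matrix.sub_mulVec, dotProduct_sub, Matrix.one_mulVec, hvv,
          ← Matrix.mulVec_mulVec, hdotT, ← hw_def]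
      rw [heq2] at h0
      linarith
    have hww0 : 0 ≤ w ⬝ᵥ w := by
      have h := aux_norm_sq ((WithLp.equiv 2 (Fin n → ℝ)).symm w)
      have : WithLp.equiv 2 (Fin n → ℝ) ((WithLp.equiv 2 (Fin n → ℝ)).symm w) = w := rfl
      rw [this] at h
      rw [← h]
      positivity
    -- expand the quadratic form
    have hexp : v ⬝ᵥ (M *ᵥ v) = μ * (v ⬝ᵥ v) + c * (v ⬝ᵥ ((U * Uᵀ) *ᵥ v))
        + w ⬝ᵥ (E *ᵥ w) + w ⬝ᵥ (Err *ᵥ w) := by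
      have ha : v ⬝ᵥ ((μ • (1 : Matrix (Fin n) (Fin n) ℝ)) *ᵥ v) = μ * (v ⬝ᵥ v) := by
        rw [Matrix.smul_mulVec, Matrix.one_mulVec, dotProduct_smul, smul_eq_mul]
      have hb : v ⬝ᵥ ((c • (U * Uᵀ)) *ᵥ v) = c * (v ⬝ᵥ ((U * Uᵀ) *ᵥ v)) := by
        rw [Matrix.smul_mulVec, dotProduct_smul, smul_eq_mul]
      rw [hMdecomp, Matrix.add_mulVec, Matrix.add_mulVec, Matrix.add_mulVec,
        dotProduct_add, dotProduct_add, dotProduct_add,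
        hTBT E, hTBT Err, ha, hb]
    have hp0 : 0 ≤ v ⬝ᵥ ((U * Uᵀ) *ᵥ v) := aux_psd_dot psdUUT v
    have hp1 : v ⬝ᵥ ((U * Uᵀ) *ᵥ v) ≤ 1 := by
      have h0 : 0 ≤ v ⬝ᵥ (((1 : Matrix (Fin n) (Fin n) ℝ) - U * Uᵀ) *ᵥ v) :=
        aux_psd_dot psd1 v
      rw [Matrix.sub_mulVec, dotProduct_sub, Matrix.one_mulVec, hvv] at h0
      linarith
    have hE0 : 0 ≤ w ⬝ᵥ (E *ᵥ w) := aux_psd_dot hEpsd w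
    have hE1 : w ⬝ᵥ (E *ᵥ w) ≤ specNorm2 E := by
      have := aux_spec_bound E w
      have h2 : specNorm2 E * (w ⬝ᵥ w) ≤ specNorm2 E * 1 := by
        apply mul_le_mul_of_nonneg_left hww (specNorm2_nonneg E)
      calc w ⬝ᵥ (E *ᵥ w) ≤ |w ⬝ᵥ (E *ᵥ w)| := le_abs_self _
        _ ≤ specNorm2 E * (w ⬝ᵥ w) := this
        _ ≤ specNorm2 E := by linarith
    have hErr1 : |w ⬝ᵥ (Err *ᵥ w)| ≤ specNorm2 Err := by
      have := aux_spec_bound Err w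
      have h2 : specNorm2 Err * (w ⬝ᵥ w) ≤ specNorm2 Err * 1 := by
        apply mul_le_mul_of_nonneg_left hww (specNorm2_nonneg Err)
      linarith
    have hErrlo : -specNorm2 Err ≤ w ⬝ᵥ (Err *ᵥ w) := by
      have := abs_le.1 hErr1; linarith [this.1]
    have hErrhi : w ⬝ᵥ (Err *ᵥ w) ≤ specNorm2 Err := by
      have := abs_le.1 hErr1; linarith [this.2]
    constructor
    · rw [hq, hexp, hvv]
      have hcp0 : 0 ≤ c * (v ⬝ᵥ ((U * Uᵀ) *ᵥ v)) := mul_nonneg hc.le hp0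
      linarith [hE0, hErrlo]
    · rw [hq, hexp, hvv]
      have hcp1 : c * (v ⬝ᵥ ((U * Uᵀ) *ᵥ v)) ≤ c * 1 :=
        mul_le_mul_of_nonneg_left hp1 hc.le
      rw [mul_one] at hcp1
      linarith [hE1, hErrhi]
  -- finish: bound the sup and inf
  haveI hne : Nonempty (Metric.sphere (0 : EuclideanSpace ℝ (Fin n)) 1) := by
    refine ⟨⟨EuclideanSpace.single (⟨0, by omega⟩ : Fin n) (1:ℝ), ?_⟩⟩
    rw [mem_sphere_zero_iff_norm, EuclideanSpace.norm_single]
    norm_num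
  have hlmax : lmax M ≤ μ + c + specNorm2 E + specNorm2 Err := by
    apply ciSup_le
    intro x
    exact (key x).2
  have hlmin : μ - specNorm2 Err ≤ lmin M := by
    apply le_ciInf
    intro x
    exact (key x).1
  have hErrn : 0 ≤ specNorm2 Err := specNorm2_nonneg Err
  have hEn : 0 ≤ specNorm2 E := specNorm2_nonneg E
  have hpos : 0 < μ - specNorm2 Err := by linarith
  have hdiv : lmax M / lmin M
      ≤ (μ + c + specNorm2 E + specNorm2 Err) / (μ - specNorm2 Err) :=
    div_le_div₀ (by linarith [hc.le]) hlmax hpos hlmin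
  have heqfin : (μ + c + specNorm2 E + specNorm2 Err) / (μ - specNorm2 Err)
      = 1 + (c + specNorm2 E + 2 * specNorm2 Err) / (μ - specNorm2 Err) := by
    field_simp
    ring
  calc lmax M / lmin M
      ≤ (μ + c + specNorm2 E + specNorm2 Err) / (μ - specNorm2 Err) := hdiv
    _ = 1 + (c + specNorm2 E + 2 * specNorm2 Err) / (μ - specNorm2 Err) := heqfin
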